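/- Let σ be a primitive invertible substitution on 𝒜 = {a,b} with det M_σ = 1. If σ is selfdual, then M_σ⁻¹ = Q⁻¹ · M_σ · Q for Q = [[−1,0],[0,1]] or for Q = [[0,−1],[1,0]]; and M_σᵀ = P · M_σ · Pᵀ for P = [[0,1],[1,0]] or for P = the identity matrix. -/

import Mathlib

open scoped Matrix

/-- The two-letter alphabet `𝒜 = {a, b}`; the letter `a` is `0` and the letter `b` is `1`. -/
abbrev A2 := Fin 2

/-- A substitution on the two-letter alphabet, given by the images of the two letters.
(The nonerasing condition is stated separately as `TwoSubst.NonErasing`.) -/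
abbrev Subst := A2 → List A2

namespace TwoSubst

/-- A substitution is non-erasing if the images of the letters are nonempty words. -/
def NonErasing (σ : Subst) : Prop := ∀ i : A2, σ i ≠ []

/-- The extension of a substitution to finite words (the morphism of the free monoid). -/
def apply (σ : Subst) (w : List A2) : List A2 := w.flatMap σ

/-- The `n`-th power `σ^n` of a substitution (as a substitution). -/
def substPow (σ : Subst) (n : ℕ) : Subst := fun i => (apply σ)^[n] [i]

/-- Composition of substitutions: `(σ ∘ τ)(i) = σ(τ(i))`. -/
def comp (σ τ : Subst) : Subst := fun i => apply σ (τ i)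

/-- The substitution matrix `M_σ`: entry `(i, j)` is the number of occurrences of the
letter `i` in `σ(j)`. -/
def M (σ : Subst) : Matrix (Fin 2) (Fin 2) ℤ := fun i j => ((σ j).count i : ℤ)

/-- A substitution is primitive if some power of its substitution matrix has all
entries positive. -/
def Primitive (σ : Subst) : Prop := ∃ n : ℕ, 0 < n ∧ ∀ i j, 0 < (M σ ^ n) i j

/-- A finite word, regarded as an element of the free group `F₂`. -/
def toFG (w : List A2) : FreeGroup A2 := (w.map FreeGroup.of).prod

/-- The endomorphism of the free group `F₂` induced by a substitution. -/
def endo (σ : Subst) : Monoid.End (FreeGroup A2) := FreeGroup.lift fun i => toFG (σ i)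

/-- A substitution is invertible if its extension to the free group `F₂` is an
automorphism of `F₂`. -/
def IsInvertible (σ : Subst) : Prop := Function.Bijective (endo σ)

/-- Two substitutions are conjugate, `σ ~ ρ`, if `σ = γ_w ∘ ρ` as endomorphisms of `F₂`
for some `w ∈ F₂`, where `γ_w x = w * x * w⁻¹`. -/
def Conj (σ ρ : Subst) : Prop := ∃ w : FreeGroup A2, ∀ x, endo σ x = w * endo ρ x * w⁻¹

/-- `w` is a (finite) factor of the bi-infinite word `u : ℤ → A2`. -/
def IsFactor (w : List A2) (u : ℤ → A2) : Prop :=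
  ∃ k : ℤ, w = (List.range w.length).map fun i => u (k + i)

/-- The hull `X_σ`: the set of bi-infinite words all of whose finite factors appear as
factors of `σ^n(a)` or `σ^n(b)` for some `n ∈ ℕ`. -/
def Hull (σ : Subst) : Set (ℤ → A2) :=
  { u | ∀ w : List A2, IsFactor w u → ∃ (n : ℕ) (x : A2), w <:+: substPow σ n x }

/-- The substitution `E : a ↦ b, b ↦ a`. -/
def Esub : Subst := ![[1], [0]]

/-- The substitution `L : a ↦ a, b ↦ ab`. -/
def Lsub : Subst := ![[0], [0, 1]]

/-- The composition `L^{a₁} ∘ E ∘ L^{a₂} ∘ E ∘ ⋯ ∘ E ∘ L^{a_m}` encoded by the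
nonempty list of exponents `a₁ :: [a₂, …, a_m]`. -/
def chain : ℕ → List ℕ → Subst
  | a, [] => substPow Lsub a
  | a, b :: rest => comp (substPow Lsub a) (comp Esub (chain b rest))

/-- The letter-exchange map `a ↦ b, b ↦ a` on letters. -/
def swapA : A2 → A2 := fun i => if i = 0 then 1 else 0

/-- The substitution matrix with real entries. -/
noncomputable def Mreal (σ : Subst) : Matrix (Fin 2) (Fin 2) ℝ := (M σ).map fun z => (z : ℝ)

/-- `lam` is the inflation factor (Perron–Frobenius eigenvalue) of `σ`: it is an
eigenvalue of `M_σ` admitting a positive eigenvector. -/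
def IsInflation (σ : Subst) (lam : ℝ) : Prop :=
  ∃ v : Fin 2 → ℝ, (∀ i, 0 < v i) ∧ (Mreal σ).mulVec v = lam • v

/-- `α` is the frequency of `σ`: `α ∈ (0,1)` and `(1-α, α)` is an eigenvector of `M_σ`
for an eigenvalue with positive eigenvector (necessarily the Perron-Frobenius
eigenvalue, i.e. the inflation factor, when `σ` is primitive). -/
def IsFreq (σ : Subst) (α : ℝ) : Prop :=
  0 < α ∧ α < 1 ∧ ∃ lam : ℝ, (Mreal σ).mulVec ![1 - α, α] = lam • ![1 - α, α]

/-- The automorphism `τ_a : a ↦ a⁻¹, b ↦ b` of the free group `F₂`. -/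
def tauA : Monoid.End (FreeGroup A2) :=
  FreeGroup.lift fun i : A2 => if i = 0 then (FreeGroup.of (0 : A2))⁻¹ else FreeGroup.of 1

/-- `ρ` is the reciprocal substitution `σ̄ = τ_a ∘ σ⁻¹ ∘ τ_a⁻¹` of `σ`, where
`φ` is the inverse automorphism `σ⁻¹` (note `τ_a⁻¹ = τ_a`). -/
def IsReciprocal (σ ρ : Subst) (φ : Monoid.End (FreeGroup A2)) : Prop :=
  (∀ x, φ (endo σ x) = x) ∧ (∀ x, endo σ (φ x) = x) ∧
    NonErasing ρ ∧ ∀ x, endo ρ x = tauA (φ (tauA x))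

/-- `σ` is a selfdual substitution (relative to its reciprocal `ρ = σ̄`):
`σ ~ σ̄` or `σ ~ E ∘ σ̄ ∘ E`. -/
def SelfDual (σ ρ : Subst) : Prop :=
  Conj σ ρ ∨ Conj σ (comp Esub (comp ρ Esub))

/-! ### Strands and dual maps -/

/-- Integer vectors in the plane. -/
abbrev V2 := Fin 2 → ℤ

/-- The abelianisation map `A : 𝒜* → ℤ²`, counting occurrences of each letter. -/
def Avec (w : List A2) : V2 := fun i => (w.count i : ℤ)

/-- The space `𝒢` (and its dual `𝒢*`): formal finite real linear combinations of the
basis elements `(W, i)` (resp. `(W, i*)`), `W ∈ ℤ²`, `i ∈ 𝒜`. -/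
abbrev Gspace := (V2 × A2) →₀ ℝ

/-- The image of the basis element `(W, i)` under `E₁(σ)`. -/
noncomputable def E1Basis (σ : Subst) (p : V2 × A2) : Gspace :=
  ∑ k ∈ Finset.range (σ p.2).length,
    Finsupp.single ((M σ).mulVec p.1 + Avec ((σ p.2).take k), (σ p.2).getD k p.2) (1 : ℝ)

/-- The one-dimensional extension `E₁(σ)`, as a linear map on `𝒢`. -/
noncomputable def E1 (σ : Subst) : Gspace →ₗ[ℝ] Gspace :=
  Finsupp.lift Gspace ℝ (V2 × A2) (E1Basis σ)

/-- The image of the basis element `(W, i*)` under the dual map `E₁*(σ)`: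
`E₁*(σ)(W, i*) = Σ_{j,k : σ(j)_k = i} (M_σ⁻¹·(W + A(σ(j)_{k+1}⋯σ(j)_{|σ(j)|})), j*)`. -/
noncomputable def E1starBasis (σ : Subst) (p : V2 × A2) : Gspace :=
  ∑ j : A2, ∑ k ∈ Finset.range (σ j).length,
    if (σ j).getD k j = p.2 then
      Finsupp.single ((M σ)⁻¹.mulVec (p.1 + Avec ((σ j).drop (k + 1))), j) (1 : ℝ)
    else 0

/-- The dual map `E₁*(σ)`, as a linear map on `𝒢*`. -/
noncomputable def E1star (σ : Subst) : Gspace →ₗ[ℝ] Gspace :=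
  Finsupp.lift Gspace ℝ (V2 × A2) (E1starBasis σ)

/-- The basis vector `e_a = (1,0)`. -/
def ea : V2 := ![1, 0]

/-- The basis vector `e_b = (0,1)`. -/
def eb : V2 := ![0, 1]

/-- `γ(0), …, γ(n)` is a finite dual strand: each step is `e_a` or `-e_b`. -/
def IsDualStrand (n : ℕ) (γ : ℕ → V2) : Prop :=
  ∀ k < n, γ (k + 1) - γ k = ea ∨ γ (k + 1) - γ k = -eb

/-- The element of `𝒢*` associated with a finite dual strand `γ(0), …, γ(n)`:
the sum of `(γ(k), b*)` over the `e_a`-steps and `(γ(k+1), a*)` over the `-e_b`-steps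
(the letter `a` is `0`, the letter `b` is `1`). -/
noncomputable def strandElem (n : ℕ) (γ : ℕ → V2) : Gspace :=
  ∑ k ∈ Finset.range n,
    if γ (k + 1) - γ k = ea then Finsupp.single (γ k, (1 : A2)) (1 : ℝ)
    else Finsupp.single (γ (k + 1), (0 : A2)) (1 : ℝ)

/-! ### Endomorphisms of the free group -/

/-- The exponent-sum homomorphism of the generator `i` on `F₂`. -/
def expSum (i : A2) : FreeGroup A2 →* Multiplicative ℤ :=
  FreeGroup.lift fun j : A2 => Multiplicative.ofAdd (if j = i then (1 : ℤ) else 0)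

/-- The abelianised matrix of an endomorphism of `F₂`: entry `(i,j)` is the exponent
sum of the generator `i` in the image of the generator `j`. -/
def abelMatrix (σ : Monoid.End (FreeGroup A2)) : Matrix (Fin 2) (Fin 2) ℤ :=
  fun i j => Multiplicative.toAdd (expSum i (σ (FreeGroup.of j)))

/-- `wprod ρ w k = w · ρ(w) · ρ²(w) ⋯ ρ^{k−1}(w)`. -/
def wprod (ρ : Monoid.End (FreeGroup A2)) (w : FreeGroup A2) : ℕ → FreeGroup A2
  | 0 => 1
  | k + 1 => wprod ρ w k * (ρ ^ k) w

section Aux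
open Multiplicative



lemma expSum_of (i j : A2) : expSum i (FreeGroup.of j) = ofAdd (if j = i then (1:ℤ) else 0) :=
  FreeGroup.lift_apply_of

lemma expSum_end (f : Monoid.End (FreeGroup A2)) (i : A2) (x : FreeGroup A2) :
    toAdd (expSum i (f x)) = ∑ k : A2, abelMatrix f i k * toAdd (expSum k x) := by
  let h₂ : FreeGroup A2 →* Multiplicative ℤ :=
  { toFun := fun x => ofAdd (∑ k : A2, abelMatrix f i k * toAdd (expSum k x))
    map_one' := by simp
    map_mul' := by
      intro x y
      simp only [map_mul, toAdd_mul, mul_add, Finset.sum_add_distrib, ofAdd_add] }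
  have h : ((expSum i).comp (f : FreeGroup A2 →* FreeGroup A2)) = h₂ := by
    apply FreeGroup.ext_hom
    intro j
    show expSum i (f (FreeGroup.of j)) = ofAdd (∑ k : A2, abelMatrix f i k * toAdd (expSum k (FreeGroup.of j)))
    have : ∀ k : A2, toAdd (expSum k (FreeGroup.of j)) = if j = k then (1:ℤ) else 0 := by
      intro k; rw [expSum_of]; rfl
    simp only [this]
    have hs : (∑ k : A2, abelMatrix f i k * if j = k then (1:ℤ) else 0) = abelMatrix f i j := by
      fin_cases j <;> simp [Fin.sum_univ_two]
    rw [hs]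
    simp [abelMatrix]
  have h2 := DFunLike.congr_fun h x
  exact congrArg toAdd h2

lemma abelMatrix_mul (f g : Monoid.End (FreeGroup A2)) :
    abelMatrix (f * g) = abelMatrix f * abelMatrix g := by
  ext i j
  show toAdd (expSum i (f (g (FreeGroup.of j)))) = _
  rw [expSum_end f i]
  simp [Matrix.mul_apply, abelMatrix]

lemma abelMatrix_conj {f g : Monoid.End (FreeGroup A2)} (w : FreeGroup A2)
    (h : ∀ x, f x = w * g x * w⁻¹) : abelMatrix f = abelMatrix g := by
  ext i j
  simp only [abelMatrix, h, map_mul, map_inv, toAdd_mul, toAdd_inv]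
  ring

lemma expSum_toFG (i : A2) (w : List A2) :
    toAdd (expSum i (toFG w)) = (w.count i : ℤ) := by
  induction w with
  | nil => simp [toFG]
  | cons j t ih =>
    have : toFG (j :: t) = FreeGroup.of j * toFG t := by simp [toFG]
    rw [this, map_mul, toAdd_mul, ih, expSum_of, List.count_cons]
    push_cast
    rcases eq_or_ne j i with h | h <;> simp [h] <;> ring

lemma abelMatrix_endo (σ : Subst) : abelMatrix (endo σ) = M σ := by
  ext i j
  show toAdd (expSum i (endo σ (FreeGroup.of j))) = _
  rw [show endo σ (FreeGroup.of j) = toFG (σ j) from FreeGroup.lift_apply_of, expSum_toFG]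
  rfl

lemma endo_toFG (σ : Subst) (w : List A2) : endo σ (toFG w) = toFG (apply σ w) := by
  induction w with
  | nil => simp [toFG, apply]
  | cons j t ih =>
    have h1 : toFG (j :: t) = FreeGroup.of j * toFG t := by simp [toFG]
    have h2 : apply σ (j :: t) = σ j ++ apply σ t := by simp [apply]
    have h3 : toFG (σ j ++ apply σ t) = toFG (σ j) * toFG (apply σ t) := by
      simp [toFG]
    rw [h1, map_mul, ih, h2, h3]
    congr 1
    exact FreeGroup.lift_apply_of

lemma endo_comp (σ τ : Subst) : endo (comp σ τ) = endo σ * endo τ := by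
  apply FreeGroup.ext_hom
  intro j
  show endo (comp σ τ) (FreeGroup.of j) = endo σ (endo τ (FreeGroup.of j))
  rw [show endo τ (FreeGroup.of j) = toFG (τ j) from FreeGroup.lift_apply_of, endo_toFG]
  exact FreeGroup.lift_apply_of

lemma tauA_of0 : tauA (FreeGroup.of 0) = (FreeGroup.of (0:A2))⁻¹ := by
  rw [show tauA (FreeGroup.of 0) = (if (0:A2) = 0 then (FreeGroup.of (0 : A2))⁻¹ else FreeGroup.of 1) from FreeGroup.lift_apply_of]; simp

lemma tauA_of1 : tauA (FreeGroup.of 1) = FreeGroup.of (1:A2) := by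
  rw [show tauA (FreeGroup.of 1) = (if (1:A2) = 0 then (FreeGroup.of (0 : A2))⁻¹ else FreeGroup.of 1) from FreeGroup.lift_apply_of]; norm_num

lemma abelMatrix_tauA : abelMatrix tauA = !![(-1:ℤ),0;0,1] := by
  ext i j
  fin_cases i <;> fin_cases j <;>
    simp [abelMatrix, tauA_of0, tauA_of1, map_inv, expSum_of, toAdd_inv]

lemma transpose_fin_two' (a b c d : ℤ) : (!![a,b;c,d])ᵀ = !![a,c;b,d] := by
  ext i j; fin_cases i <;> fin_cases j <;> rfl

lemma M_Esub : M Esub = !![(0:ℤ),1;1,0] := by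
  ext i j
  fin_cases i <;> fin_cases j <;> simp [M, Esub]



end Aux

end TwoSubst

open TwoSubst in
/-- If `σ` is a primitive invertible selfdual substitution on `{a,b}`
with `det M_σ = 1` (with reciprocal `ρ = σ̄`), then `M_σ⁻¹ = Q⁻¹·M_σ·Q` for
`Q = [[−1,0],[0,1]]` or `Q = [[0,−1],[1,0]]`, and `M_σᵀ = P·M_σ·Pᵀ` for
`P = [[0,1],[1,0]]` or `P = 1`. -/
theorem selfdual_matrix_conditions (σ ρ : Subst) (hne : NonErasing σ)
    (hprim : Primitive σ) (hdet : (M σ).det = 1)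
    (φ : Monoid.End (FreeGroup A2)) (hrecip : IsReciprocal σ ρ φ)
    (hsd : SelfDual σ ρ) :
    ((M σ)⁻¹ = (!![(-1 : ℤ), 0; 0, 1])⁻¹ * M σ * !![(-1 : ℤ), 0; 0, 1] ∨
      (M σ)⁻¹ = (!![(0 : ℤ), -1; 1, 0])⁻¹ * M σ * !![(0 : ℤ), -1; 1, 0]) ∧
    ((M σ)ᵀ = !![(0 : ℤ), 1; 1, 0] * M σ * (!![(0 : ℤ), 1; 1, 0])ᵀ ∨
      (M σ)ᵀ = (1 : Matrix (Fin 2) (Fin 2) ℤ) * M σ * (1 : Matrix (Fin 2) (Fin 2) ℤ)ᵀ) := by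
  obtain ⟨hφ1, hφ2, hρne, hρ⟩ := hrecip
  have habel1 : abelMatrix 1 = 1 := by
    ext i j
    fin_cases i <;> fin_cases j <;> simp [abelMatrix, expSum_of]
  have hσφ : endo σ * φ = 1 := MonoidHom.ext hφ2
  have hMN : M σ * abelMatrix φ = 1 := by
    rw [← abelMatrix_endo σ, ← abelMatrix_mul, hσφ, habel1]
  have hNinv : abelMatrix φ = (M σ)⁻¹ := (Matrix.inv_eq_right_inv hMN).symm
  have hρend : endo ρ = tauA * (φ * tauA) := MonoidHom.ext hρ
  have hMρ : abelMatrix (endo ρ) = !![(-1:ℤ),0;0,1] * ((M σ)⁻¹ * !![(-1:ℤ),0;0,1]) := by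
    rw [hρend, abelMatrix_mul, abelMatrix_mul, abelMatrix_tauA, hNinv]
  have hMinv : (M σ)⁻¹ = !![M σ 1 1, -(M σ 0 1); -(M σ 1 0), M σ 0 0] := by
    rw [Matrix.inv_def, hdet, Matrix.adjugate_fin_two]
    simp
  have hD : (!![(-1:ℤ),0;0,1])⁻¹ = !![(-1:ℤ),0;0,1] := by
    apply Matrix.inv_eq_right_inv
    rw [Matrix.one_fin_two]
    norm_num [Matrix.mul_fin_two]
  have hQ : (!![(0:ℤ),-1;1,0])⁻¹ = !![(0:ℤ),1;-1,0] := by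
    apply Matrix.inv_eq_right_inv
    rw [Matrix.one_fin_two]
    norm_num [Matrix.mul_fin_two]
  rcases hsd with ⟨w, hc⟩ | ⟨w, hc⟩
  · have hM : M σ = !![(-1:ℤ),0;0,1] * ((M σ)⁻¹ * !![(-1:ℤ),0;0,1]) := by
      have h := abelMatrix_conj w hc
      rw [abelMatrix_endo σ, hMρ] at h
      exact h
    rw [hMinv] at hM
    nth_rewrite 1 [Matrix.eta_fin_two (M σ)] at hM
    rw [Matrix.mul_fin_two, Matrix.mul_fin_two] at hM
    have hps : M σ 0 0 = M σ 1 1 := by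
      have h00 := congrFun (congrFun hM 0) 0
      simp at h00
      linarith
    constructor
    · left
      rw [hD, hMinv]
      nth_rewrite 5 [Matrix.eta_fin_two (M σ)]
      rw [Matrix.mul_fin_two, Matrix.mul_fin_two]
      ext i j
      fin_cases i <;> fin_cases j <;> simp <;> linarith
    · left
      rw [Matrix.eta_fin_two (M σ), transpose_fin_two', transpose_fin_two',
        Matrix.mul_fin_two, Matrix.mul_fin_two]
      ext i j
      fin_cases i <;> fin_cases j <;> simp <;> linarith
  · have hEE : endo (comp Esub (comp ρ Esub)) = endo Esub * (endo ρ * endo Esub) := by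
      rw [endo_comp, endo_comp]
    have hME : abelMatrix (endo Esub) = !![(0:ℤ),1;1,0] := by
      rw [abelMatrix_endo, M_Esub]
    have hM : M σ = !![(0:ℤ),1;1,0] *
        ((!![(-1:ℤ),0;0,1] * ((M σ)⁻¹ * !![(-1:ℤ),0;0,1])) * !![(0:ℤ),1;1,0]) := by
      have h := abelMatrix_conj w hc
      rw [abelMatrix_endo σ, hEE, abelMatrix_mul, abelMatrix_mul, hME, hMρ] at h
      exact h
    rw [hMinv] at hM
    nth_rewrite 1 [Matrix.eta_fin_two (M σ)] at hM
    rw [Matrix.mul_fin_two, Matrix.mul_fin_two, Matrix.mul_fin_two, Matrix.mul_fin_two] at hM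
    have hqr : M σ 0 1 = M σ 1 0 := by
      have h01 := congrFun (congrFun hM 0) 1
      simp at h01
      linarith
    constructor
    · right
      rw [hQ, hMinv]
      nth_rewrite 5 [Matrix.eta_fin_two (M σ)]
      rw [Matrix.mul_fin_two, Matrix.mul_fin_two]
      ext i j
      fin_cases i <;> fin_cases j <;> simp <;> linarith
    · right
      rw [Matrix.transpose_one, mul_one, one_mul]
      rw [Matrix.eta_fin_two (M σ), transpose_fin_two']
      ext i j
      fin_cases i <;> fin_cases j <;> simp <;> linarith
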